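/- arXiv:2303.05894 — 4 statements merged into one kernel-verified Lean document; each statement's English description precedes it below -/
import Mathlib

section
/- Let P_j be self-adjoint mutually orthogonal projections summing to id_H, A_j ∈ L(H') self-adjoint, S ∈ L(H) and T_j ∈ L(H') unitary with T_j = exp(-i t B_j) for self-adjoint B_j. Then exp(-i t ∑_j (S† P_j S) ⊗ (T_j† A_j T_j)) = (S ⊗ id)† T† U T (S ⊗ id), where T = exp(-i t ∑_j P_j ⊗ B_j) and U = exp(-i t ∑_j P_j ⊗ A_j). -/
open Matrix Kronecker

namespace ExpProjAux

variable {d d' N : ℕ}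

lemma sum_kronecker_right {ι : Type*} (s : Finset ι) (A : ι → Matrix (Fin d) (Fin d) ℂ)
    (B : Matrix (Fin d') (Fin d') ℂ) :
    (∑ j ∈ s, A j) ⊗ₖ B = ∑ j ∈ s, A j ⊗ₖ B := by
  ext ⟨i1, i2⟩ ⟨j1, j2⟩
  simp [Matrix.sum_apply, Finset.sum_mul]

lemma kronecker_conjTranspose (A : Matrix (Fin d) (Fin d) ℂ)
    (B : Matrix (Fin d') (Fin d') ℂ) : (A ⊗ₖ B)ᴴ = Aᴴ ⊗ₖ Bᴴ := by
  ext ⟨i1, i2⟩ ⟨j1, j2⟩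
  simp [Matrix.conjTranspose_apply, mul_comm]

lemma block_mul (P : Fin N → Matrix (Fin d) (Fin d) ℂ)
    (hPorth : ∀ j k, P j * P k = if j = k then P j else 0)
    (X Y : Fin N → Matrix (Fin d') (Fin d') ℂ) :
    (∑ j, P j ⊗ₖ X j) * (∑ j, P j ⊗ₖ Y j) = ∑ j, P j ⊗ₖ (X j * Y j) := by
  rw [Finset.sum_mul_sum]
  simp_rw [← Matrix.mul_kronecker_mul, hPorth]
  rw [Finset.sum_comm]
  refine Finset.sum_congr rfl fun k _ => ?_
  rw [Finset.sum_eq_single k]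
  · simp
  · intro j _ hj; simp [hj]
  · simp

lemma block_one (P : Fin N → Matrix (Fin d) (Fin d) ℂ)
    (hPsum : ∑ j, P j = 1) :
    ∑ j, P j ⊗ₖ (1 : Matrix (Fin d') (Fin d') ℂ) = 1 := by
  rw [← sum_kronecker_right, hPsum, Matrix.one_kronecker_one]

lemma block_exp (P : Fin N → Matrix (Fin d) (Fin d) ℂ)
    (hPorth : ∀ j k, P j * P k = if j = k then P j else 0)
    (hPsum : ∑ j, P j = 1)
    (X : Fin N → Matrix (Fin d') (Fin d') ℂ) :
    NormedSpace.exp (∑ j, P j ⊗ₖ X j) = ∑ j, P j ⊗ₖ NormedSpace.exp (X j) := by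
  letI : SeminormedRing (Matrix (Fin d') (Fin d') ℂ) := Matrix.linftyOpSemiNormedRing
  letI : NormedRing (Matrix (Fin d') (Fin d') ℂ) := Matrix.linftyOpNormedRing
  letI : NormedAlgebra ℂ (Matrix (Fin d') (Fin d') ℂ) := Matrix.linftyOpNormedAlgebra
  letI : SeminormedRing (Matrix (Fin d × Fin d') (Fin d × Fin d') ℂ) :=
    Matrix.linftyOpSemiNormedRing
  letI : NormedRing (Matrix (Fin d × Fin d') (Fin d × Fin d') ℂ) := Matrix.linftyOpNormedRing
  letI : NormedAlgebra ℂ (Matrix (Fin d × Fin d') (Fin d × Fin d') ℂ) :=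
    Matrix.linftyOpNormedAlgebra
  letI : NormedAlgebra ℚ (Matrix (Fin d') (Fin d') ℂ) :=
    NormedAlgebra.restrictScalars ℚ ℂ (Matrix (Fin d') (Fin d') ℂ)
  letI : NormedAlgebra ℚ (Matrix (Fin d × Fin d') (Fin d × Fin d') ℂ) :=
    NormedAlgebra.restrictScalars ℚ ℂ (Matrix (Fin d × Fin d') (Fin d × Fin d') ℂ)
  let Φ : (Fin N → Matrix (Fin d') (Fin d') ℂ) →ₐ[ℂ]
      Matrix (Fin d × Fin d') (Fin d × Fin d') ℂ :=
  { toFun := fun M => ∑ j, P j ⊗ₖ M j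
    map_one' := block_one P hPsum
    map_mul' := fun M M' => (block_mul P hPorth M M').symm
    map_zero' := by simp
    map_add' := fun M M' => by
      simp [Matrix.kronecker_add, Finset.sum_add_distrib]
    commutes' := fun r => by
      simp only [Pi.algebraMap_apply, Algebra.algebraMap_eq_smul_one,
        Matrix.kronecker_smul, ← Finset.smul_sum, block_one P hPsum] }
  have hcont : Continuous Φ := Φ.toLinearMap.continuous_of_finiteDimensional
  have h := NormedSpace.map_exp Φ hcont X
  -- h : Φ (exp ℂ X) = exp ℂ (Φ X)
  have h2 : ∑ j, P j ⊗ₖ NormedSpace.exp (X j)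
      = NormedSpace.exp (∑ j, P j ⊗ₖ X j) := by
    show _ = NormedSpace.exp (Φ X)
    refine Eq.trans ?_ h
    show ∑ j, _ = ∑ j, P j ⊗ₖ NormedSpace.exp X j
    exact Finset.sum_congr rfl fun j _ => (congrArg (P j ⊗ₖ ·) (Pi.coe_exp X j)).symm
  exact h2.symm

end ExpProjAux

open ExpProjAux

theorem exp_transformed_projection_tensor_decomposition
    (d d' N : ℕ)
    (P : Fin N → Matrix (Fin d) (Fin d) ℂ)
    (A B : Fin N → Matrix (Fin d') (Fin d') ℂ)
    (S : Matrix (Fin d) (Fin d) ℂ)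
    (T : Fin N → Matrix (Fin d') (Fin d') ℂ)
    (hPsa : ∀ j, (P j)ᴴ = P j) (hAsa : ∀ j, (A j)ᴴ = A j)
    (hBsa : ∀ j, (B j)ᴴ = B j)
    (hPorth : ∀ j k, P j * P k = if j = k then P j else 0)
    (hPsum : ∑ j, P j = 1)
    (hS : S ∈ Matrix.unitaryGroup (Fin d) ℂ)
    (hT : ∀ j, T j ∈ Matrix.unitaryGroup (Fin d') ℂ)
    (t : ℝ)
    (hTB : ∀ j, T j = NormedSpace.exp ((-(Complex.I * t)) • B j)) :
    NormedSpace.exp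
        ((-(Complex.I * t)) • ∑ j, (Sᴴ * P j * S) ⊗ₖ ((T j)ᴴ * A j * T j)) =
      (S ⊗ₖ (1 : Matrix (Fin d') (Fin d') ℂ))ᴴ *
        (NormedSpace.exp ((-(Complex.I * t)) • ∑ j, P j ⊗ₖ B j))ᴴ *
        NormedSpace.exp ((-(Complex.I * t)) • ∑ j, P j ⊗ₖ A j) *
        NormedSpace.exp ((-(Complex.I * t)) • ∑ j, P j ⊗ₖ B j) *
        (S ⊗ₖ (1 : Matrix (Fin d') (Fin d') ℂ)) := by
  set c : ℂ := -(Complex.I * t) with hc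
  have key : ∀ X : Fin N → Matrix (Fin d') (Fin d') ℂ,
      NormedSpace.exp (c • ∑ j, P j ⊗ₖ X j)
        = ∑ j, P j ⊗ₖ NormedSpace.exp (c • X j) := by
    intro X
    rw [Finset.smul_sum]
    simp_rw [← Matrix.kronecker_smul]
    exact block_exp P hPorth hPsum _
  have hW : NormedSpace.exp (c • ∑ j, P j ⊗ₖ B j) = ∑ j, P j ⊗ₖ T j := by
    rw [key]
    exact Finset.sum_congr rfl fun j _ => by rw [← hTB j]
  set W : Matrix (Fin d × Fin d') (Fin d × Fin d') ℂ := ∑ j, P j ⊗ₖ T j with hWdef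
  have hWH : Wᴴ = ∑ j, P j ⊗ₖ (T j)ᴴ := by
    rw [hWdef, Matrix.conjTranspose_sum]
    exact Finset.sum_congr rfl fun j _ => by rw [kronecker_conjTranspose, hPsa]
  have hTl : ∀ j, (T j)ᴴ * T j = 1 := fun j => by
    simpa [Matrix.star_eq_conjTranspose] using (Matrix.mem_unitaryGroup_iff'.mp (hT j))
  have hTr : ∀ j, T j * (T j)ᴴ = 1 := fun j => by
    simpa [Matrix.star_eq_conjTranspose] using (Matrix.mem_unitaryGroup_iff.mp (hT j))
  set M : Matrix (Fin d × Fin d') (Fin d × Fin d') ℂ := S ⊗ₖ (1 : Matrix (Fin d') (Fin d') ℂ)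
    with hMdef
  have hMH : Mᴴ = Sᴴ ⊗ₖ (1 : Matrix (Fin d') (Fin d') ℂ) := by
    rw [hMdef, kronecker_conjTranspose, Matrix.conjTranspose_one]
  have hSl : Sᴴ * S = 1 := by
    simpa [Matrix.star_eq_conjTranspose] using (Matrix.mem_unitaryGroup_iff'.mp hS)
  have hSr : S * Sᴴ = 1 := by
    simpa [Matrix.star_eq_conjTranspose] using (Matrix.mem_unitaryGroup_iff.mp hS)
  have hMl : Mᴴ * M = 1 := by
    rw [hMH, hMdef, ← Matrix.mul_kronecker_mul, hSl, one_mul, Matrix.one_kronecker_one]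
  have hMr : M * Mᴴ = 1 := by
    rw [hMH, hMdef, ← Matrix.mul_kronecker_mul, hSr, one_mul, Matrix.one_kronecker_one]
  have hWl : Wᴴ * W = 1 := by
    rw [hWH, hWdef, block_mul P hPorth]
    simp_rw [hTl]
    exact block_one P hPsum
  have hWr : W * Wᴴ = 1 := by
    rw [hWH, hWdef, block_mul P hPorth]
    simp_rw [hTr]
    exact block_one P hPsum
  set V : Matrix (Fin d × Fin d') (Fin d × Fin d') ℂ := W * M with hVdef
  have hVH : Vᴴ = Mᴴ * Wᴴ := by rw [hVdef, Matrix.conjTranspose_mul]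
  have hVl : Vᴴ * V = 1 := by
    rw [hVH, hVdef, mul_assoc, ← mul_assoc Wᴴ W M, hWl, one_mul, hMl]
  have hVr : V * Vᴴ = 1 := by
    rw [hVH, hVdef, mul_assoc, ← mul_assoc M Mᴴ Wᴴ, hMr, one_mul, hWr]
  have hVunit : IsUnit V := ⟨⟨V, Vᴴ, hVr, hVl⟩, rfl⟩
  have hVinv : V⁻¹ = Vᴴ := Matrix.inv_eq_left_inv hVl
  have hSand : ∀ Y : Fin N → Matrix (Fin d') (Fin d') ℂ,
      Mᴴ * (∑ j, P j ⊗ₖ Y j) * M = ∑ j, (Sᴴ * P j * S) ⊗ₖ Y j := by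
    intro Y
    rw [hMH, hMdef, Finset.mul_sum, Finset.sum_mul]
    refine Finset.sum_congr rfl fun j _ => ?_
    rw [← Matrix.mul_kronecker_mul, ← Matrix.mul_kronecker_mul, one_mul, mul_one]
  have hMid : Wᴴ * ((∑ j, P j ⊗ₖ (c • A j)) * W)
      = ∑ j, P j ⊗ₖ ((T j)ᴴ * (c • A j * T j)) := by
    rw [hWdef, block_mul P hPorth, hWH, block_mul P hPorth]
  have hConj : Vᴴ * (c • ∑ j, P j ⊗ₖ A j) * V
      = c • ∑ j, (Sᴴ * P j * S) ⊗ₖ ((T j)ᴴ * A j * T j) := by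
    have h1 : c • ∑ j, P j ⊗ₖ A j = ∑ j, P j ⊗ₖ (c • A j) := by
      rw [Finset.smul_sum]; simp_rw [Matrix.kronecker_smul]
    have e : Vᴴ * (∑ j, P j ⊗ₖ (c • A j)) * V
        = Mᴴ * (Wᴴ * ((∑ j, P j ⊗ₖ (c • A j)) * W)) * M := by
      rw [hVH, hVdef]; simp only [mul_assoc]
    rw [h1, e, hMid, hSand, Finset.smul_sum]
    refine Finset.sum_congr rfl fun j _ => ?_
    rw [← Matrix.kronecker_smul]
    congr 1
    rw [smul_mul_assoc, mul_smul_comm, mul_assoc]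
  have hexp := Matrix.exp_conj' V (c • ∑ j, P j ⊗ₖ A j) hVunit
  rw [hVinv] at hexp
  rw [hW, ← hConj, hexp, hVH, hVdef]
  simp only [mul_assoc]
end

section
/- The matrix Q_N = QFT_N† C_N QFT_N, with C_N = diag(0,…,N-1), is Hermitian and its entries are (Q_N)_{j,j} = (N-1)/2 and (Q_N)_{j,k} = 1/(ω^{k-j} - 1) for j ≠ k, where ω = exp(2πi/N). -/
open Matrix Finset

lemma sum_zmod (N : ℕ) [NeZero N] (f : ℕ → ℂ) :
    ∑ m : ZMod N, f m.val = ∑ m ∈ Finset.range N, f m := by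
  refine Finset.sum_nbij' (fun m => m.val) (fun i => (i : ZMod N)) ?_ ?_ ?_ ?_ ?_ <;>
    intros <;> simp_all [ZMod.val_lt, ZMod.natCast_zmod_val, ZMod.val_cast_of_lt, Nat.mod_eq_of_lt]

lemma pow_mod_eq (z : ℂ) (N : ℕ) (h : z ^ N = 1) (a : ℕ) : z ^ a = z ^ (a % N) := by
  conv_lhs => rw [← Nat.mod_add_div a N]
  rw [pow_add, pow_mul, h, one_pow, mul_one]

lemma key_sum (n : ℕ) (z : ℂ) :
    (z - 1) * ∑ m ∈ Finset.range n, (m : ℂ) * z ^ m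
      = ((n : ℂ) - 1) * z ^ n - (∑ m ∈ Finset.range n, z ^ m) + 1 := by
  induction n with
  | zero => simp
  | succ n ih =>
    rw [Finset.sum_range_succ, Finset.sum_range_succ, mul_add, ih]
    push_cast
    ring

theorem qpe_multiplier_entries
    (N : ℕ) (hN : 2 ≤ N) [NeZero N]
    (ω : ℂ) (hω : ω = Complex.exp (2 * Real.pi * Complex.I / N))
    (F : Matrix (ZMod N) (ZMod N) ℂ)
    (hF : ∀ j k, F j k = ω ^ (j.val * k.val) / Real.sqrt N)
    (Q : Matrix (ZMod N) (ZMod N) ℂ)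
    (hQ : Q = Fᴴ * Matrix.diagonal (fun j : ZMod N => (j.val : ℂ)) * F) :
    Q.IsHermitian ∧ (∀ j, Q j j = ((N : ℂ) - 1) / 2) ∧
      ∀ j k, j ≠ k → Q j k = 1 / (ω ^ (k - j).val - 1) := by
  have hNne : (N : ℕ) ≠ 0 := NeZero.ne N
  have hNC : (N : ℂ) ≠ 0 := Nat.cast_ne_zero.mpr hNne
  have hprim : IsPrimitiveRoot ω N := hω ▸ Complex.isPrimitiveRoot_exp N hNne
  have hω1 : ω ^ N = 1 := hprim.pow_eq_one
  have hωne : ω ≠ 0 := by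
    rw [hω]; exact Complex.exp_ne_zero _
  have hconj : (starRingEnd ℂ) ω = ω ^ (N - 1) := by
    have h1 : ω * ω ^ (N - 1) = 1 := by
      rw [← pow_succ', Nat.sub_add_cancel (by omega)]; exact hω1
    have : (starRingEnd ℂ) ω = ω⁻¹ := by
      rw [hω, ← Complex.exp_conj, ← Complex.exp_neg]
      congr 1
      rw [map_div₀, _root_.map_mul, _root_.map_mul, Complex.conj_I, Complex.conj_ofReal,
        map_natCast, map_ofNat]
      ring
    rw [this, inv_eq_of_mul_eq_one_right h1]
  have hsqrt : (Real.sqrt N : ℂ) * (Real.sqrt N : ℂ) = (N : ℂ) := by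
    rw [← Complex.ofReal_mul, Real.mul_self_sqrt (Nat.cast_nonneg N)]
    norm_num
  -- entry formula
  have hentry : ∀ j k : ZMod N,
      Q j k = (∑ m ∈ Finset.range N, (m : ℂ) * (ω ^ (k - j).val) ^ m) / N := by
    intro j k
    rw [hQ, Matrix.mul_apply]
    simp only [Matrix.mul_diagonal, Matrix.conjTranspose_apply]
    have hterm : ∀ m : ZMod N,
        star (F m j) * (m.val : ℂ) * F m k
          = ((m.val : ℂ) * (ω ^ (k - j).val) ^ m.val) / N := by
      intro m
      rw [hF, hF]
      have hm : ω ^ ((N - 1) * (m.val * j.val) + m.val * k.val)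
          = (ω ^ (k - j).val) ^ m.val := by
        rw [← pow_mul]
        rw [pow_mod_eq ω N hω1 ((N - 1) * (m.val * j.val) + m.val * k.val),
            pow_mod_eq ω N hω1 ((k - j).val * m.val)]
        congr 1
        have : (((N - 1) * (m.val * j.val) + m.val * k.val : ℕ) : ZMod N)
            = (((k - j).val * m.val : ℕ) : ZMod N) := by
          push_cast [ZMod.natCast_zmod_val, Nat.cast_sub (by omega : 1 ≤ N)]
          simp [ZMod.natCast_self]
          ring
        exact (ZMod.natCast_eq_natCast_iff _ _ _).mp this
      rw [star_div₀, star_pow, Complex.star_def, hconj, Complex.conj_ofReal, ← pow_mul]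
      rw [div_mul_eq_mul_div, div_mul_div_comm, hsqrt]
      rw [show ω ^ ((N - 1) * (m.val * j.val)) * (m.val : ℂ) * ω ^ (m.val * k.val)
          = (m.val : ℂ) * (ω ^ ((N - 1) * (m.val * j.val)) * ω ^ (m.val * k.val)) from by ring,
        ← pow_add, hm]
    rw [Finset.sum_congr rfl (fun m _ => hterm m)]
    rw [← Finset.sum_div]
    congr 1
    exact sum_zmod N (fun m => (m : ℂ) * (ω ^ (k - j).val) ^ m)
  refine ⟨?_, ?_, ?_⟩
  · -- Hermitian
    show Qᴴ = Q
    rw [hQ]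
    have hD : (Matrix.diagonal fun j : ZMod N => ((j.val : ℕ) : ℂ))ᴴ
        = Matrix.diagonal fun j : ZMod N => ((j.val : ℕ) : ℂ) := by
      have hfun : (star fun j : ZMod N => ((j.val : ℂ))) = (fun j : ZMod N => ((j.val : ℂ))) := by
        funext x
        simp only [Pi.star_apply, star_natCast]
      rw [Matrix.diagonal_conjTranspose, hfun]
    rw [Matrix.conjTranspose_mul, Matrix.conjTranspose_mul, Matrix.conjTranspose_conjTranspose,
        hD, Matrix.mul_assoc]
  · -- diagonal
    intro j
    rw [hentry j j]
    simp only [sub_self, ZMod.val_zero, pow_zero, one_pow, mul_one]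
    have hg : (∑ m ∈ Finset.range N, (m : ℂ)) = N * (N - 1) / 2 := by
      have h := Finset.sum_range_id_mul_two N
      have h3 := congrArg (fun n : ℕ => (n : ℂ)) h
      push_cast [Nat.cast_sub (by omega : 1 ≤ N)] at h3
      rw [eq_div_iff (two_ne_zero)]
      linear_combination h3
    rw [hg]
    field_simp
  · -- off diagonal
    intro j k hjk
    have ha0 : (k - j).val ≠ 0 := by
      simp [ZMod.val_eq_zero, sub_eq_zero]
      exact fun h => hjk h.symm
    have haN : (k - j).val < N := ZMod.val_lt _
    have hz1 : ω ^ (k - j).val ≠ 1 :=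
      hprim.pow_ne_one_of_pos_of_lt ha0 haN
    set z := ω ^ (k - j).val with hzdef
    have hzN : z ^ N = 1 := by
      rw [hzdef, ← pow_mul, mul_comm, pow_mul, hω1, one_pow]
    have hgeom : (∑ m ∈ Finset.range N, z ^ m) = 0 := by
      rw [geom_sum_eq hz1, hzN]
      simp
    have hks := key_sum N z
    rw [hzN, hgeom] at hks
    have hS : (∑ m ∈ Finset.range N, (m : ℂ) * z ^ m) = N / (z - 1) := by
      have hz1' : z - 1 ≠ 0 := sub_ne_zero.mpr hz1
      field_simp
      linear_combination hks
    rw [hentry j k, hS]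
    have hz1' : z - 1 ≠ 0 := sub_ne_zero.mpr hz1
    field_simp
end

section
/- Let A ∈ ℂ^{N×N} be circulant with A_{j,k} = c_{(k-j) mod N}, N = N_0 N_1, ω = exp(2πi/N), and let v_m = QFT_{N_0}† |m⟩ (entries ω^{-N_1 j m}/√{N_0}). Then A = ∑_{m=0}^{N_0-1} |v_m⟩⟨v_m| ⊗ (∑_{ℓ=0}^{N_0-1} ω^{-ℓ m N_1} A^{(ℓ)}), where A^{(ℓ)}_{j,k} = c_{(k-j+N_1 ℓ) mod N}. -/
open Matrix Kronecker

theorem circulant_projection_tensor_decomposition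
    (N0 N1 : ℕ) (h0 : 0 < N0) (h1 : 0 < N1)
    (c : ZMod (N0 * N1) → ℂ)
    (ω : ℂ) (hω : ω = Complex.exp (2 * Real.pi * Complex.I / (N0 * N1 : ℕ)))
    (A : Matrix (Fin N0 × Fin N1) (Fin N0 × Fin N1) ℂ)
    (hA : ∀ j k, A j k =
      c ((((N1 * k.1 + k.2 : ℕ) : ZMod (N0 * N1))) - ((N1 * j.1 + j.2 : ℕ) : ZMod (N0 * N1))))
    (Ablock : ℕ → Matrix (Fin N1) (Fin N1) ℂ)
    (hAblock : ∀ ℓ (j k : Fin N1), Ablock ℓ j k =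
      c ((((k : ℕ) : ZMod (N0 * N1)) - ((j : ℕ) : ZMod (N0 * N1)) + (N1 * ℓ : ℕ))))
    (v : ℕ → Fin N0 → ℂ)
    (hv : ∀ m (j : Fin N0), v m j = (ω ^ (N1 * (j : ℕ) * m))⁻¹ / Real.sqrt N0) :
    A = ∑ m ∈ Finset.range N0,
      (Matrix.vecMulVec (v m) fun k => (starRingEnd ℂ) (v m k)) ⊗ₖ
        (∑ ℓ ∈ Finset.range N0, (ω ^ (ℓ * m * N1))⁻¹ • Ablock ℓ) := by
  have hN0c : (N0:ℂ) ≠ 0 := Nat.cast_ne_zero.2 h0.ne'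
  have hN1c : (N1:ℂ) ≠ 0 := Nat.cast_ne_zero.2 h1.ne'
  have hω0 : ω ≠ 0 := by rw [hω]; exact Complex.exp_ne_zero _
  have hζ : ω ^ N1 = Complex.exp (2 * Real.pi * Complex.I / N0) := by
    rw [hω, ← Complex.exp_nat_mul]
    congr 1
    push_cast
    field_simp
  have hprim : IsPrimitiveRoot (ω ^ N1) N0 := by
    rw [hζ]; exact Complex.isPrimitiveRoot_exp N0 h0.ne'
  have hconj : (starRingEnd ℂ) ω = ω⁻¹ := by
    rw [hω, ← Complex.exp_conj, ← Complex.exp_neg]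
    congr 1
    simp [map_div₀, Complex.conj_I, map_ofNat]
    ring
  have hzp : ∀ d : ℤ, ω ^ ((N1:ℤ) * d) = (ω ^ N1) ^ d := by
    intro d; rw [_root_.zpow_mul, zpow_natCast]
  -- geometric sum
  have hsum : ∀ d : ℤ, ∑ m ∈ Finset.range N0, (ω ^ ((N1:ℤ) * d)) ^ m
      = if (N0:ℤ) ∣ d then (N0:ℂ) else 0 := by
    intro d
    rw [hzp]
    by_cases hd : (N0:ℤ) ∣ d
    · rw [if_pos hd, (hprim.zpow_eq_one_iff_dvd d).2 hd]
      simp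
    · rw [if_neg hd]
      have hne : (ω ^ N1) ^ d ≠ 1 := fun h => hd ((hprim.zpow_eq_one_iff_dvd d).1 h)
      rw [geom_sum_eq hne]
      have : ((ω ^ N1) ^ d) ^ N0 = 1 := by
        rw [← _root_.zpow_natCast ((ω ^ N1) ^ d), ← _root_.zpow_mul, mul_comm, _root_.zpow_mul,
          _root_.zpow_natCast, hprim.pow_eq_one, _root_.one_zpow]
      rw [this]
      simp
  have hsq : ((Real.sqrt N0 : ℝ) : ℂ) * ((Real.sqrt N0 : ℝ) : ℂ) = (N0:ℂ) := by
    rw [← Complex.ofReal_mul, Real.mul_self_sqrt (Nat.cast_nonneg _)]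
    simp
  ext ⟨j1, j2⟩ ⟨k1, k2⟩
  -- key exponent identity
  have key : ∀ (m ℓ : ℕ),
      (ω ^ (N1 * (j1:ℕ) * m))⁻¹ * (ω ^ (N1 * (k1:ℕ) * m)) * (ω ^ (ℓ * m * N1))⁻¹
        = (ω ^ ((N1:ℤ) * ((k1:ℤ) - j1 - ℓ))) ^ m := by
    intro m ℓ
    rw [← _root_.zpow_natCast ω (N1 * (k1:ℕ) * m), ← _root_.zpow_natCast ω (N1 * (j1:ℕ) * m),
      ← _root_.zpow_natCast ω (ℓ * m * N1), ← _root_.zpow_neg, ← _root_.zpow_neg,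
      ← zpow_add₀ hω0, ← zpow_add₀ hω0, ← _root_.zpow_natCast (ω ^ ((N1:ℤ) * ((k1:ℤ) - j1 - ℓ))) m,
      ← _root_.zpow_mul]
    congr 1
    push_cast
    ring
  -- simp the RHS entry
  simp only [Matrix.sum_apply, Matrix.kroneckerMap_apply, Matrix.vecMulVec_apply,
    Matrix.smul_apply, smul_eq_mul, Finset.mul_sum, hv]
  rw [Finset.sum_comm]
  set ℓs : ℕ := (↑k1 + N0 - ↑j1) % N0 with hℓs
  have hℓsmem : ℓs ∈ Finset.range N0 := Finset.mem_range.2 (Nat.mod_lt _ h0)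
  have hdvdstar : (N0:ℤ) ∣ ((k1:ℤ) - j1 - ℓs) := by
    have hle : (j1:ℕ) ≤ (k1:ℕ) + N0 := le_trans (le_of_lt j1.2) (Nat.le_add_left _ _)
    have h1' : ((((k1:ℕ) + N0 - j1 : ℕ)) : ℤ) = (k1:ℤ) + N0 - j1 := by
      push_cast [hle]; ring
    have h2' : ((ℓs : ℕ) : ℤ) = (((k1:ℕ) + N0 - j1 : ℕ) : ℤ) % N0 := by
      rw [hℓs]; push_cast; ring
    set a : ℤ := (((k1:ℕ) + N0 - j1 : ℕ) : ℤ)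
    have : (k1:ℤ) - j1 - ℓs = (a - a % N0) - N0 := by rw [h2']; rw [h1'] ; ring
    rw [this]
    have h3 : (N0:ℤ) ∣ (a - a % N0) := ⟨a / N0, by rw [Int.emod_def]; ring⟩
    exact dvd_sub h3 (dvd_refl _)
  have inner : ∀ ℓ : ℕ, ∑ m ∈ Finset.range N0,
      ((ω ^ (N1 * (j1:ℕ) * m))⁻¹ / ((Real.sqrt N0 : ℝ) : ℂ) *
        (starRingEnd ℂ) ((ω ^ (N1 * (k1:ℕ) * m))⁻¹ / ((Real.sqrt N0 : ℝ) : ℂ)) *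
        ((ω ^ (ℓ * m * N1))⁻¹ * Ablock ℓ j2 k2))
      = if (N0:ℤ) ∣ ((k1:ℤ) - j1 - ℓ) then Ablock ℓ j2 k2 else 0 := by
    intro ℓ
    have hterm : ∀ m : ℕ,
        (ω ^ (N1 * (j1:ℕ) * m))⁻¹ / ((Real.sqrt N0 : ℝ) : ℂ) *
          (starRingEnd ℂ) ((ω ^ (N1 * (k1:ℕ) * m))⁻¹ / ((Real.sqrt N0 : ℝ) : ℂ)) *
          ((ω ^ (ℓ * m * N1))⁻¹ * Ablock ℓ j2 k2)
        = (ω ^ ((N1:ℤ) * ((k1:ℤ) - j1 - ℓ))) ^ m * (Ablock ℓ j2 k2 / N0) := by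
      intro m
      rw [map_div₀, map_inv₀, map_pow, hconj, Complex.conj_ofReal, inv_pow, inv_inv,
        ← key m ℓ, ← hsq]
      field_simp
    rw [Finset.sum_congr rfl (fun m _ => hterm m), ← Finset.sum_mul, hsum]
    split_ifs with hd
    · field_simp
    · simp
  rw [Finset.sum_congr rfl (fun ℓ _ => inner ℓ)]
  have huniq : ∀ b ∈ Finset.range N0, b ≠ ℓs →
      (if (N0:ℤ) ∣ ((k1:ℤ) - j1 - b) then Ablock b j2 k2 else 0) = 0 := by
    intro b hb hbne
    rw [if_neg]
    intro hdvd
    have h := dvd_sub hdvdstar hdvd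
    rw [show ((k1:ℤ) - j1 - ℓs) - ((k1:ℤ) - j1 - b) = (b:ℤ) - ℓs by ring] at h
    have hb' : (b:ℤ) < N0 := by exact_mod_cast Finset.mem_range.1 hb
    have hℓ' : (ℓs:ℤ) < N0 := by exact_mod_cast Nat.mod_lt _ h0
    have h0' : (b:ℤ) - ℓs = 0 := Int.eq_zero_of_abs_lt_dvd h (by
      rw [abs_lt]
      constructor <;> omega)
    exact hbne (by omega)
  rw [Finset.sum_eq_single_of_mem ℓs hℓsmem huniq, if_pos hdvdstar, hAblock, hA]
  congr 1
  have h1' : (((N1 * (k1:ℕ) + (k2:ℕ) : ℕ)) : ZMod (N0 * N1)) - ((N1 * (j1:ℕ) + (j2:ℕ) : ℕ) : ZMod (N0 * N1))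
      = (((N1 * (k1:ℕ) + k2 : ℤ) - (N1 * (j1:ℕ) + j2 : ℤ) : ℤ) : ZMod (N0 * N1)) := by
    push_cast; ring
  have h2' : (((k2:ℕ) : ZMod (N0 * N1)) - ((j2:ℕ) : ZMod (N0 * N1)) + ((N1 * ℓs : ℕ) : ZMod (N0 * N1)))
      = ((((k2:ℕ) : ℤ) - ((j2:ℕ) : ℤ) + (N1 * ℓs : ℤ) : ℤ) : ZMod (N0 * N1)) := by
    push_cast; ring
  rw [h1', h2', ZMod.intCast_eq_intCast_iff]
  rw [Int.modEq_iff_dvd]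
  obtain ⟨t, ht⟩ := hdvdstar
  refine ⟨-t, ?_⟩
  push_cast
  linear_combination (-(N1:ℤ)) * ht
end

section
/- Let N = N_0 N_1, ω = exp(2πi/N), Q_M = QFT_M† C_M QFT_M with C_M = diag(0,…,M-1), D = diag(1, ω, …, ω^{N_1 - 1}) ∈ ℂ^{N_1×N_1}, and v_m = QFT_{N_0}† |m⟩. Then Q_N = N_0 ∑_{m=0}^{N_0-1} |v_m⟩⟨v_m| ⊗ ((D†)^m Q_{N_1} D^m) + Q_{N_0} ⊗ I_{N_1}. -/
open Matrix Kronecker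

/-- The `M × M` quantum Fourier transform matrix, entries `ω_M^{jk}/√M`. -/
noncomputable def qft (M : ℕ) : Matrix (Fin M) (Fin M) ℂ :=
  fun j k => Complex.exp (2 * Real.pi * Complex.I / M) ^ ((j : ℕ) * (k : ℕ)) / Real.sqrt M

/-- The QPE multiplier `Q_M = QFT_M† C_M QFT_M` with `C_M = diag(0, …, M-1)`. -/
noncomputable def qpeMult (M : ℕ) : Matrix (Fin M) (Fin M) ℂ :=
  (qft M)ᴴ * Matrix.diagonal (fun j : Fin M => ((j : ℕ) : ℂ)) * qft M

/-- Identification of `Fin N0 × Fin N1` with `Fin (N0 * N1)`, `(a, b) ↦ N1 * a + b`. -/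
def emb (N0 N1 : ℕ) (a : Fin N0) (b : Fin N1) : Fin (N0 * N1) :=
  ⟨N1 * a + b, by
    have ha : (a : ℕ) + 1 ≤ N0 := a.isLt
    have hb : (b : ℕ) < N1 := b.isLt
    calc N1 * (a : ℕ) + (b : ℕ) < N1 * (a : ℕ) + N1 := by omega
      _ = N1 * ((a : ℕ) + 1) := by ring
      _ ≤ N1 * N0 := Nat.mul_le_mul_left _ ha
      _ = N0 * N1 := Nat.mul_comm _ _⟩

/-! ### Auxiliary material -/

/-- The primitive `M`-th root of unity `exp(2πi/M)`. -/
noncomputable def rootc (M : ℕ) : ℂ := Complex.exp (2 * Real.pi * Complex.I / M)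

lemma rootc_ne_zero (M : ℕ) : rootc M ≠ 0 := Complex.exp_ne_zero _

lemma rootc_star (M : ℕ) : (starRingEnd ℂ) (rootc M) = (rootc M)⁻¹ := by
  rw [rootc, ← Complex.exp_conj, ← Complex.exp_neg]
  congr 1
  simp only [map_div₀, _root_.map_mul, Complex.conj_I, Complex.conj_ofReal, map_ofNat,
    Complex.conj_natCast]
  ring

lemma rootc_star_pow (M n : ℕ) : (starRingEnd ℂ) (rootc M ^ n) = (rootc M ^ n)⁻¹ := by
  rw [map_pow, rootc_star, inv_pow]

lemma rootc_pow_self (M : ℕ) (hM : M ≠ 0) : rootc M ^ M = 1 := by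
  have hM' : (M : ℂ) ≠ 0 := Nat.cast_ne_zero.mpr hM
  rw [rootc, ← Complex.exp_nat_mul]
  rw [show (M : ℂ) * (2 * Real.pi * Complex.I / M) = 2 * Real.pi * Complex.I by
    field_simp]
  exact Complex.exp_two_pi_mul_I

lemma rootc_pow_left (N0 N1 : ℕ) (h0 : N0 ≠ 0) (h1 : N1 ≠ 0) :
    rootc (N0 * N1) ^ N1 = rootc N0 := by
  rw [rootc, rootc, ← Complex.exp_nat_mul]
  congr 1
  have h0' : (N0 : ℂ) ≠ 0 := Nat.cast_ne_zero.mpr h0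
  have h1' : (N1 : ℂ) ≠ 0 := Nat.cast_ne_zero.mpr h1
  push_cast
  field_simp

lemma rootc_pow_right (N0 N1 : ℕ) (h0 : N0 ≠ 0) (h1 : N1 ≠ 0) :
    rootc (N0 * N1) ^ N0 = rootc N1 := by
  rw [Nat.mul_comm]; exact rootc_pow_left N1 N0 h1 h0

lemma rootc_pow_add_mul (M : ℕ) (hM : M ≠ 0) (A k : ℕ) :
    rootc M ^ (A + M * k) = rootc M ^ A := by
  rw [pow_add, pow_mul, rootc_pow_self M hM, one_pow, mul_one]

/-- Entrywise formula for `qpeMult`. -/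
lemma qpe_apply (M : ℕ) (hM : 0 < M) (j k : Fin M) :
    qpeMult M j k =
      ∑ t : Fin M, (t : ℂ) * rootc M ^ ((t : ℕ) * (k : ℕ)) *
        (rootc M ^ ((t : ℕ) * (j : ℕ)))⁻¹ / M := by
  have hsq : ((Real.sqrt M : ℝ) : ℂ) * ((Real.sqrt M : ℝ) : ℂ) = (M : ℂ) := by
    rw [← Complex.ofReal_mul, Real.mul_self_sqrt (by positivity)]
    push_cast; ring
  rw [qpeMult, Matrix.mul_apply]
  refine Finset.sum_congr rfl fun t _ => ?_
  rw [Matrix.mul_diagonal, Matrix.conjTranspose_apply, qft, qft]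
  show (starRingEnd ℂ) (rootc M ^ ((t:ℕ)*(j:ℕ)) / (Real.sqrt M : ℝ)) * (t:ℕ) *
    (rootc M ^ ((t:ℕ)*(k:ℕ)) / (Real.sqrt M : ℝ)) = _
  rw [map_div₀, rootc_star_pow, Complex.conj_ofReal, ← hsq]
  ring

/-- Identification of `Fin N0 × Fin N1` with `Fin (N0 * N1)`, `(m, s) ↦ m + N0 * s`. -/
def mixEquiv (N0 N1 : ℕ) (h0 : 0 < N0) : Fin N0 × Fin N1 ≃ Fin (N0 * N1) where
  toFun p := ⟨(p.1 : ℕ) + N0 * (p.2 : ℕ), by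
    calc (p.1 : ℕ) + N0 * (p.2 : ℕ) < N0 + N0 * (p.2 : ℕ) := by
          have := p.1.isLt; omega
      _ = N0 * ((p.2 : ℕ) + 1) := by ring
      _ ≤ N0 * N1 := Nat.mul_le_mul_left _ p.2.isLt⟩
  invFun t := (⟨(t : ℕ) % N0, Nat.mod_lt _ h0⟩, ⟨(t : ℕ) / N0,
    Nat.div_lt_of_lt_mul t.isLt⟩)
  left_inv p := by
    ext
    · show ((p.1 : ℕ) + N0 * (p.2 : ℕ)) % N0 = (p.1 : ℕ)
      rw [Nat.add_mul_mod_self_left, Nat.mod_eq_of_lt p.1.isLt]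
    · show ((p.1 : ℕ) + N0 * (p.2 : ℕ)) / N0 = (p.2 : ℕ)
      rw [Nat.add_mul_div_left _ _ h0, Nat.div_eq_of_lt p.1.isLt, Nat.zero_add]
  right_inv t := by
    ext
    show (t : ℕ) % N0 + N0 * ((t : ℕ) / N0) = (t : ℕ)
    exact Nat.mod_add_div _ _

lemma mixEquiv_val (N0 N1 : ℕ) (h0 : 0 < N0) (m : Fin N0) (s : Fin N1) :
    ((mixEquiv N0 N1 h0 (m, s)) : ℕ) = (m : ℕ) + N0 * (s : ℕ) := rfl

lemma emb_val (N0 N1 : ℕ) (a : Fin N0) (b : Fin N1) :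
    ((emb N0 N1 a b) : ℕ) = N1 * (a : ℕ) + (b : ℕ) := rfl

theorem qpe_multiplier_recursive_decomposition
    (N0 N1 : ℕ) (h0 : 0 < N0) (h1 : 0 < N1)
    (ω : ℂ) (hω : ω = Complex.exp (2 * Real.pi * Complex.I / (N0 * N1 : ℕ)))
    (D : Matrix (Fin N1) (Fin N1) ℂ)
    (hD : D = Matrix.diagonal (fun j : Fin N1 => ω ^ (j : ℕ)))
    (v : Fin N0 → Fin N0 → ℂ)
    (hv : ∀ m j, v m j = (ω ^ (N1 * (j : ℕ) * (m : ℕ)))⁻¹ / Real.sqrt N0) :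
    (qpeMult (N0 * N1)).submatrix
        (fun p : Fin N0 × Fin N1 => emb N0 N1 p.1 p.2)
        (fun p : Fin N0 × Fin N1 => emb N0 N1 p.1 p.2) =
      (N0 : ℂ) • (∑ m : Fin N0,
        (Matrix.vecMulVec (v m) fun k => (starRingEnd ℂ) (v m k)) ⊗ₖ
          ((Dᴴ) ^ (m : ℕ) * qpeMult N1 * D ^ (m : ℕ))) +
        qpeMult N0 ⊗ₖ (1 : Matrix (Fin N1) (Fin N1) ℂ) := by
  have hωr : rootc (N0 * N1) = ω := hω.symm
  have hωne : ω ≠ 0 := hωr ▸ rootc_ne_zero _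
  have hN : 0 < N0 * N1 := Nat.mul_pos h0 h1
  have hN0 : (N0 : ℂ) ≠ 0 := Nat.cast_ne_zero.mpr h0.ne'
  have hN1 : (N1 : ℂ) ≠ 0 := Nat.cast_ne_zero.mpr h1.ne'
  have hsq0 : ((Real.sqrt N0 : ℝ) : ℂ) ≠ 0 := by
    simp only [ne_eq, Complex.ofReal_eq_zero]
    positivity
  have hsqsq : ((Real.sqrt N0 : ℝ) : ℂ) * ((Real.sqrt N0 : ℝ) : ℂ) = (N0 : ℂ) := by
    rw [← Complex.ofReal_mul, Real.mul_self_sqrt (by positivity)]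
    push_cast; ring
  have hmod : ∀ A k : ℕ, ω ^ (A + N0 * N1 * k) = ω ^ A := by
    intro A k; rw [← hωr]; exact rootc_pow_add_mul _ hN.ne' A k
  have hstar : ∀ n : ℕ, (starRingEnd ℂ) (ω ^ n) = (ω ^ n)⁻¹ := by
    intro n; rw [← hωr]; exact rootc_star_pow _ n
  have h10 : ω ^ N0 = rootc N1 := by rw [← hωr]; exact rootc_pow_right N0 N1 h0.ne' h1.ne'
  have h01 : ω ^ N1 = rootc N0 := by rw [← hωr]; exact rootc_pow_left N0 N1 h0.ne' h1.ne'
  -- entry of the conjugated matrix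
  have hDentry : ∀ (m : Fin N0) (b d : Fin N1),
      ((Dᴴ) ^ (m : ℕ) * qpeMult N1 * D ^ (m : ℕ)) b d =
        ((ω ^ (b : ℕ))⁻¹) ^ (m : ℕ) * qpeMult N1 b d * (ω ^ (d : ℕ)) ^ (m : ℕ) := by
    intro m b d
    rw [hD, Matrix.diagonal_conjTranspose, Matrix.diagonal_pow, Matrix.diagonal_pow,
      Matrix.mul_diagonal, Matrix.diagonal_mul]
    simp only [Pi.pow_apply, Pi.star_apply]
    rw [show star (ω ^ (b:ℕ)) = (ω ^ (b:ℕ))⁻¹ from hstar (b:ℕ)]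
  ext ⟨a, b⟩ ⟨c, d⟩
  rw [Matrix.submatrix_apply]
  rw [qpe_apply _ hN, ← Equiv.sum_comp (mixEquiv N0 N1 h0), Fintype.sum_prod_type]
  -- the two canonical double sums
  set β : ℂ := ω ^ (N0 * (d : ℕ)) * (ω ^ (N0 * (b : ℕ)))⁻¹ with hβdef
  have hgeom : ∑ s : Fin N1, β ^ (s : ℕ) = if b = d then (N1 : ℂ) else 0 := by
    by_cases hbd : b = d
    · subst hbd
      have : β = 1 := mul_inv_cancel₀ (pow_ne_zero _ hωne)
      simp [this]
    · have hβ1 : β ≠ 1 := by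
        intro hcon
        apply hbd
        have hdb : ω ^ (N0 * (d : ℕ)) = ω ^ (N0 * (b : ℕ)) :=
          (mul_inv_eq_one₀ (pow_ne_zero _ hωne)).mp hcon
        rw [pow_mul, pow_mul, h10] at hdb
        exact (Fin.ext ((Complex.isPrimitiveRoot_exp N1 h1.ne').pow_inj d.isLt b.isLt hdb)).symm
      have h2 : ∀ n : Fin N1, (ω ^ (N0 * (n : ℕ))) ^ N1 = 1 := by
        intro n
        rw [← pow_mul, show N0 * (n:ℕ) * N1 = N0 * N1 * (n:ℕ) by ring, pow_mul, ← hωr,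
          rootc_pow_self _ hN.ne', one_pow]
      have hβN : β ^ N1 = 1 := by
        rw [hβdef, mul_pow, inv_pow, h2 d, h2 b, inv_one, mul_one]
      rw [Fin.sum_univ_eq_sum_range (fun i => β ^ i), geom_sum_eq hβ1, hβN]
      simp [hbd]
  have helper_sum : ∀ (K L P Q : ℂ) (f : Fin N1 → ℂ),
      ∑ s : Fin N1, K * (L * (P * f s * Q)) = K * (L * (P * (∑ s : Fin N1, f s) * Q)) := by
    intro K L P Q f
    simp only [Finset.mul_sum, Finset.sum_mul]
  dsimp only
  trans ((∑ m : Fin N0, ∑ s : Fin N1, (N0:ℂ) * (v m a * (starRingEnd ℂ) (v m c) *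
      ((ω ^ (b:ℕ))⁻¹ ^ (m:ℕ) * ((s:ℂ) * ω ^ (N0 * ((s:ℕ) * (d:ℕ))) *
        (ω ^ (N0 * ((s:ℕ) * (b:ℕ))))⁻¹ / (N1:ℂ)) * (ω ^ (d:ℕ)) ^ (m:ℕ)))) +
    (∑ m : Fin N0, (m:ℂ) * ω ^ (N1 * ((m:ℕ) * (c:ℕ))) * (ω ^ (N1 * ((m:ℕ) * (a:ℕ))))⁻¹ / (N0:ℂ)) *
      (if b = d then 1 else 0))
  · -- the reindexed sum splits into the two canonical pieces
    have key : ∀ (m : Fin N0) (s : Fin N1),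
        ((mixEquiv N0 N1 h0 (m, s) : ℕ) : ℂ) *
            rootc (N0 * N1) ^ ((mixEquiv N0 N1 h0 (m, s) : ℕ) * (emb N0 N1 c d : ℕ)) *
            (rootc (N0 * N1) ^ ((mixEquiv N0 N1 h0 (m, s) : ℕ) * (emb N0 N1 a b : ℕ)))⁻¹ /
            ((N0 * N1 : ℕ) : ℂ) =
          (N0:ℂ) * (v m a * (starRingEnd ℂ) (v m c) *
            ((ω ^ (b:ℕ))⁻¹ ^ (m:ℕ) * ((s:ℂ) * ω ^ (N0 * ((s:ℕ) * (d:ℕ))) *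
              (ω ^ (N0 * ((s:ℕ) * (b:ℕ))))⁻¹ / (N1:ℂ)) * (ω ^ (d:ℕ)) ^ (m:ℕ))) +
          ((m:ℂ) * ω ^ (N1 * ((m:ℕ) * (c:ℕ)) + (m:ℕ) * (d:ℕ)) *
            (ω ^ (N1 * ((m:ℕ) * (a:ℕ)) + (m:ℕ) * (b:ℕ)))⁻¹ / ((N0:ℂ) * (N1:ℂ))) * β ^ (s:ℕ) := by
      intro m s
      have hvv : v m a * (starRingEnd ℂ) (v m c) =
          (ω ^ (N1 * (a:ℕ) * (m:ℕ)))⁻¹ * ω ^ (N1 * (c:ℕ) * (m:ℕ)) / (N0:ℂ) := by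
        rw [hv, hv, map_div₀, map_inv₀, hstar, inv_inv, Complex.conj_ofReal,
          div_mul_div_comm, hsqsq]
      rw [mixEquiv_val, emb_val, emb_val, hωr, hvv, hβdef]
      rw [show ((m:ℕ) + N0*(s:ℕ)) * (N1*(c:ℕ) + (d:ℕ)) =
          (N1*((m:ℕ)*(c:ℕ)) + (m:ℕ)*(d:ℕ) + N0*((s:ℕ)*(d:ℕ))) + N0*N1*((s:ℕ)*(c:ℕ)) from by
            ring,
        show ((m:ℕ) + N0*(s:ℕ)) * (N1*(a:ℕ) + (b:ℕ)) =
          (N1*((m:ℕ)*(a:ℕ)) + (m:ℕ)*(b:ℕ) + N0*((s:ℕ)*(b:ℕ))) + N0*N1*((s:ℕ)*(a:ℕ)) from by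
            ring,
        hmod, hmod]
      simp only [pow_add, mul_pow, inv_pow, ← pow_mul, mul_inv, inv_inv]
      push_cast
      field_simp
      ring
    refine Eq.trans (Finset.sum_congr rfl fun m _ => Finset.sum_congr rfl fun s _ => key m s) ?_
    simp only [Finset.sum_add_distrib]
    congr 1
    calc ∑ m : Fin N0, ∑ s : Fin N1,
          ((m:ℂ) * ω ^ (N1 * ((m:ℕ) * (c:ℕ)) + (m:ℕ) * (d:ℕ)) *
            (ω ^ (N1 * ((m:ℕ) * (a:ℕ)) + (m:ℕ) * (b:ℕ)))⁻¹ / ((N0:ℂ) * (N1:ℂ))) * β ^ (s:ℕ)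
        = ∑ m : Fin N0,
          ((m:ℂ) * ω ^ (N1 * ((m:ℕ) * (c:ℕ)) + (m:ℕ) * (d:ℕ)) *
            (ω ^ (N1 * ((m:ℕ) * (a:ℕ)) + (m:ℕ) * (b:ℕ)))⁻¹ / ((N0:ℂ) * (N1:ℂ))) *
            (∑ s : Fin N1, β ^ (s:ℕ)) := by
          refine Finset.sum_congr rfl fun m _ => ?_
          rw [Finset.mul_sum]
      _ = _ := by
          rw [hgeom]
          by_cases hbd : b = d
          · subst hbd
            simp only [eq_self_iff_true, if_true, mul_one]
            refine Finset.sum_congr rfl fun m _ => ?_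
            simp only [pow_add, mul_inv]
            field_simp
          · simp [hbd]
  · -- the canonical pieces agree with the right-hand side
    simp only [Matrix.add_apply, Matrix.smul_apply, Matrix.sum_apply,
      Matrix.kroneckerMap_apply, Matrix.vecMulVec_apply, smul_eq_mul, hDentry,
      Matrix.one_apply]
    congr 1
    · rw [Finset.mul_sum]
      refine Finset.sum_congr rfl fun m _ => ?_
      calc ∑ s : Fin N1, (N0:ℂ) * (v m a * (starRingEnd ℂ) (v m c) *
            ((ω ^ (b:ℕ))⁻¹ ^ (m:ℕ) * ((s:ℂ) * ω ^ (N0 * ((s:ℕ) * (d:ℕ))) *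
              (ω ^ (N0 * ((s:ℕ) * (b:ℕ))))⁻¹ / (N1:ℂ)) * (ω ^ (d:ℕ)) ^ (m:ℕ)))
          = ∑ s : Fin N1, (N0:ℂ) * (v m a * (starRingEnd ℂ) (v m c) *
            ((ω ^ (b:ℕ))⁻¹ ^ (m:ℕ) * ((s:ℂ) * (ω ^ N0) ^ ((s:ℕ) * (d:ℕ)) *
              ((ω ^ N0) ^ ((s:ℕ) * (b:ℕ)))⁻¹ / (N1:ℂ)) * (ω ^ (d:ℕ)) ^ (m:ℕ))) := by
            refine Finset.sum_congr rfl fun s _ => ?_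
            rw [show ω ^ (N0 * ((s:ℕ) * (d:ℕ))) = (ω ^ N0) ^ ((s:ℕ) * (d:ℕ)) from pow_mul ω N0 _,
              show ω ^ (N0 * ((s:ℕ) * (b:ℕ))) = (ω ^ N0) ^ ((s:ℕ) * (b:ℕ)) from pow_mul ω N0 _]
        _ = (N0:ℂ) * (v m a * (starRingEnd ℂ) (v m c) *
            ((ω ^ (b:ℕ))⁻¹ ^ (m:ℕ) * (∑ s : Fin N1, (s:ℂ) * (ω ^ N0) ^ ((s:ℕ) * (d:ℕ)) *
              ((ω ^ N0) ^ ((s:ℕ) * (b:ℕ)))⁻¹ / (N1:ℂ)) * (ω ^ (d:ℕ)) ^ (m:ℕ))) :=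
            helper_sum _ _ _ _ _
        _ = _ := by rw [qpe_apply N1 h1 b d, ← h10]
    · rw [qpe_apply N0 h0 a c, ← h01]
      congr 1
      refine Finset.sum_congr rfl fun m _ => ?_
      rw [show ω ^ (N1 * ((m:ℕ) * (c:ℕ))) = (ω ^ N1) ^ ((m:ℕ) * (c:ℕ)) from pow_mul ω N1 _,
        show ω ^ (N1 * ((m:ℕ) * (a:ℕ))) = (ω ^ N1) ^ ((m:ℕ) * (a:ℕ)) from pow_mul ω N1 _]
end
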